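/- Let a = 0, b = 1, so the Riccati equation is μ̇(t) = μ²(t) + (−1)·μ(t) + α, i.e. μ̇ = μ² − μ + α, with μ(0) = m₀ ∈ [0, 1/2]. If 0 < α ≤ 1/4, then the solution μ(t) exists for all t ≥ 0 and satisfies 0 ≤ μ(t) ≤ 1/2 for all t ≥ 0. -/

import Mathlib

lemma stmt5_alg (δ α P Q : ℝ) (hδsq : δ^2 = 1/4 - α) (hQ : Q ≠ 0) :
    (1/2 + P/Q)^2 - (1/2 + P/Q) + α = (P^2 - δ^2*Q^2)/Q^2 := by
  have h : (P^2 - δ^2*Q^2)/Q^2 = (P/Q)^2 - δ^2 := by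
    field_simp
  rw [h, hδsq]; ring

theorem stmt_5 (α m₀ : ℝ) (hα : 0 < α) (hα' : α ≤ 1 / 4)
    (hm₀ : m₀ ∈ Set.Icc (0 : ℝ) (1 / 2)) :
    ∃ μ : ℝ → ℝ, μ 0 = m₀ ∧
      (∀ t ≥ (0 : ℝ), HasDerivAt μ (μ t ^ 2 - μ t + α) t) ∧
      (∀ t ≥ (0 : ℝ), 0 ≤ μ t ∧ μ t ≤ 1 / 2) := by
  obtain ⟨hm0, hm1⟩ := hm₀
  set v₀ : ℝ := m₀ - 1/2 with hv₀
  clear_value v₀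
  have hv0le : v₀ ≤ 0 := by rw [hv₀]; linarith
  have hv0ge : -(1/2) ≤ v₀ := by rw [hv₀]; linarith
  rcases eq_or_lt_of_le hα' with heq | hlt
  · -- α = 1/4 case
    refine ⟨fun t => 1/2 + v₀ / (1 - v₀ * t),
      by simp only [mul_zero, sub_zero, div_one]; rw [hv₀]; ring, ?_, ?_⟩
    · intro t ht
      have hD : (1 : ℝ) - v₀ * t ≠ 0 := by nlinarith
      have hd : HasDerivAt (fun t : ℝ => 1/2 + v₀ / (1 - v₀ * t))
          ((0 * (1 - v₀ * t) - v₀ * (0 - v₀ * 1)) / (1 - v₀ * t)^2) t :=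
        ((hasDerivAt_const t v₀).div
          ((hasDerivAt_const t (1:ℝ)).sub ((hasDerivAt_id t).const_mul v₀)) hD).const_add _
      convert hd using 1
      simp only [heq]
      field_simp
      ring
    · intro t ht
      have hD : (1 : ℝ) ≤ 1 - v₀ * t := by nlinarith
      constructor
      · show (0:ℝ) ≤ 1/2 + v₀ / (1 - v₀ * t)
        have h1 : v₀ ≤ v₀ / (1 - v₀ * t) := by
          rw [le_div_iff₀ (by linarith)]
          nlinarith
        linarith
      · show (1:ℝ)/2 + v₀ / (1 - v₀ * t) ≤ 1/2
        have : v₀ / (1 - v₀ * t) ≤ 0 :=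
          div_nonpos_of_nonpos_of_nonneg hv0le (by linarith)
        linarith
  · -- α < 1/4 case
    set δ : ℝ := Real.sqrt (1/4 - α) with hδdef
    have hδpos : 0 < δ := Real.sqrt_pos.mpr (by linarith)
    have hδsq : δ^2 = 1/4 - α := Real.sq_sqrt (by linarith)
    clear_value δ
    have hδlt : δ < 1/2 := by nlinarith
    have hsinh : ∀ t ≥ (0:ℝ), 0 ≤ Real.sinh (δ*t) := by
      intro t ht
      rw [← Real.sinh_zero]
      exact Real.sinh_le_sinh.mpr (mul_nonneg hδpos.le ht)
    have hsc : ∀ x : ℝ, Real.sinh x ≤ Real.cosh x := fun x => by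
      nlinarith [Real.cosh_sq_sub_sinh_sq x, Real.one_le_cosh x]
    have hDpos : ∀ t ≥ (0:ℝ), 0 < δ * Real.cosh (δ*t) - v₀ * Real.sinh (δ*t) := by
      intro t ht
      have h1 := Real.one_le_cosh (δ*t)
      have h2 := hsinh t ht
      nlinarith
    refine ⟨fun t => 1/2 + δ*(v₀ * Real.cosh (δ*t) - δ * Real.sinh (δ*t))
        / (δ * Real.cosh (δ*t) - v₀ * Real.sinh (δ*t)), ?_, ?_, ?_⟩
    · show (1:ℝ)/2 + δ*(v₀ * Real.cosh (δ*0) - δ * Real.sinh (δ*0))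
        / (δ * Real.cosh (δ*0) - v₀ * Real.sinh (δ*0)) = m₀
      rw [mul_zero, Real.cosh_zero, Real.sinh_zero, hv₀]
      field_simp
      ring
    · intro t ht
      have hDne : δ * Real.cosh (δ*t) - v₀ * Real.sinh (δ*t) ≠ 0 := (hDpos t ht).ne'
      have hc : HasDerivAt (fun t => Real.cosh (δ*t)) (Real.sinh (δ*t) * δ) t := by
        simpa using ((hasDerivAt_id t).const_mul δ).cosh
      have hs : HasDerivAt (fun t => Real.sinh (δ*t)) (Real.cosh (δ*t) * δ) t := by
        simpa using ((hasDerivAt_id t).const_mul δ).sinh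
      have hNd : HasDerivAt (fun t => δ*(v₀ * Real.cosh (δ*t) - δ * Real.sinh (δ*t)))
          (δ * (v₀ * (Real.sinh (δ*t) * δ) - δ * (Real.cosh (δ*t) * δ))) t :=
        ((hc.const_mul v₀).sub (hs.const_mul δ)).const_mul δ
      have hDd : HasDerivAt (fun t => δ * Real.cosh (δ*t) - v₀ * Real.sinh (δ*t))
          (δ * (Real.sinh (δ*t) * δ) - v₀ * (Real.cosh (δ*t) * δ)) t :=
        (hc.const_mul δ).sub (hs.const_mul v₀)
      have hd := (hNd.div hDd hDne).const_add (1/2 : ℝ)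
      convert hd using 1
      · rfl
      · rfl
      · rfl
      have e1 : δ * (v₀ * (Real.sinh (δ*t) * δ) - δ * (Real.cosh (δ*t) * δ))
            * (δ * Real.cosh (δ*t) - v₀ * Real.sinh (δ*t))
          - δ*(v₀ * Real.cosh (δ*t) - δ * Real.sinh (δ*t))
            * (δ * (Real.sinh (δ*t) * δ) - v₀ * (Real.cosh (δ*t) * δ))
          = (δ*(v₀ * Real.cosh (δ*t) - δ * Real.sinh (δ*t)))^2
            - δ^2 * (δ * Real.cosh (δ*t) - v₀ * Real.sinh (δ*t))^2 := by ring
      show _ = _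
      rw [e1]
      exact stmt5_alg δ α _ _ hδsq hDne
    · have main : ∀ c s : ℝ, 1 ≤ c → 0 ≤ s → s ≤ c → 0 < δ*c - v₀*s →
          0 ≤ 1/2 + δ*(v₀*c - δ*s)/(δ*c - v₀*s) ∧
            1/2 + δ*(v₀*c - δ*s)/(δ*c - v₀*s) ≤ 1/2 := by
        intro c s h1 h2 h3 hDp
        constructor
        · have heq2 : (1:ℝ)/2 + δ*(v₀*c - δ*s) / (δ*c - v₀*s)
              = ((δ*c - v₀*s)/2 + δ*(v₀*c - δ*s)) / (δ*c - v₀*s) := by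
            field_simp
          rw [heq2]
          apply div_nonneg _ hDp.le
          nlinarith [mul_nonneg (mul_nonneg hδpos.le (by linarith : (0:ℝ) ≤ 2*v₀+1))
              (sub_nonneg.mpr h3),
            mul_nonneg (by nlinarith : (0:ℝ) ≤ δ*(2*v₀+1) - (2*δ^2+v₀)) h2]
        · have hNle : δ*(v₀*c - δ*s) ≤ 0 := by
            have : v₀ * c ≤ 0 := mul_nonpos_of_nonpos_of_nonneg hv0le (by linarith)
            nlinarith
          have := div_nonpos_of_nonpos_of_nonneg hNle hDp.le
          linarith
      intro t ht
      exact main (Real.cosh (δ*t)) (Real.sinh (δ*t)) (Real.one_le_cosh _)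
        (hsinh t ht) (hsc _) (hDpos t ht)
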